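/- In the exterior algebra E = K⟨a,b,c,d⟩ (char K ≠ 2), the element a∧b + c∧d has rank 4 (as a skew-symmetric bilinear form / 4×4 alternating matrix), whereas every degree-2 element of an exterior algebra on a 3-dimensional space of linear forms has rank at most 2. Consequently the ideal (a∧b+c∧d, a∧c, b∧c) is not the square of the maximal ideal of any exterior subalgebra generated by 3 linear forms of E. -/

import Mathlib

open ExteriorAlgebra

private noncomputable def stmt9DetF (K : Type*) [Field K] :
    ∀ i : ℕ, (Fin 4 → K) [⋀^Fin i]→ₗ[K] K
  | 4 => Matrix.detRowAlternating
  | _ => 0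

private lemma stmt9_quad (K : Type*) [Field K] (a b c d : Fin 4 → K) :
    ι K a * ι K b * (ι K c * ι K d) = ιMulti K 4 ![a, b, c, d] := by
  rw [ιMulti_apply]
  simp [List.ofFn_succ, mul_assoc]

private lemma stmt9_prod4 (K : Type*) [Field K] (W : Submodule K (Fin 4 → K))
    (hW : Module.finrank K W = 3)
    (x1 x2 x3 x4 : Fin 4 → K) (h1 : x1 ∈ W) (h2 : x2 ∈ W) (h3 : x3 ∈ W) (h4 : x4 ∈ W) :
    ι K x1 * ι K x2 * (ι K x3 * ι K x4) = 0 := by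
  rw [stmt9_quad]
  refine AlternatingMap.map_linearDependent _ _ fun hli => ?_
  have hrange : Set.range ![x1, x2, x3, x4] ⊆ (W : Set (Fin 4 → K)) := by
    rintro - ⟨i, rfl⟩
    fin_cases i <;> assumption
  have hle : Submodule.span K (Set.range ![x1, x2, x3, x4]) ≤ W := Submodule.span_le.mpr hrange
  have hcard := linearIndependent_iff_card_le_finrank_span.mp hli
  rw [Set.finrank] at hcard
  have hfin : Module.finrank K (Submodule.span K (Set.range ![x1, x2, x3, x4])) ≤ 3 :=
    hW ▸ Submodule.finrank_mono hle
  simp [Fintype.card_fin] at hcard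
  omega

/-- Degree-2 projection of a member of an ideal generated by degree-2 elements lies in the
`K`-span of the generators. -/
private lemma stmt9_proj (K : Type*) [Field K] (S : Set (ExteriorAlgebra K (Fin 4 → K)))
    (hS : ∀ s ∈ S, s ∈ (⋀[K]^2 (Fin 4 → K) : Submodule K (ExteriorAlgebra K (Fin 4 → K))))
    (x : ExteriorAlgebra K (Fin 4 → K)) (hx : x ∈ Ideal.span S) :
    (DirectSum.decompose (fun i => (⋀[K]^i (Fin 4 → K) :
        Submodule K (ExteriorAlgebra K (Fin 4 → K)))) x 2 : ExteriorAlgebra K (Fin 4 → K))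
      ∈ Submodule.span K S := by
  letI : Module (ExteriorAlgebra K (Fin 4 → K)) (ExteriorAlgebra K (Fin 4 → K)) :=
    Semiring.toModule
  obtain ⟨c, hc, rfl⟩ := Submodule.mem_span_set.mp hx
  rw [Finsupp.sum, DirectSum.decompose_sum, DFinsupp.finset_sum_apply,
    AddSubmonoidClass.coe_finset_sum]
  refine Submodule.sum_mem _ fun z hz => ?_
  have hzS : z ∈ S := hc hz
  have h2 : (DirectSum.decompose (fun i => (⋀[K]^i (Fin 4 → K) : Submodule K _))
      (c z • z) 2 : ExteriorAlgebra K (Fin 4 → K))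
      = (DirectSum.decompose (fun i => (⋀[K]^i (Fin 4 → K) : Submodule K _)) (c z) 0 :
        ExteriorAlgebra K (Fin 4 → K)) * z := by
    rw [smul_eq_mul]
    have := DirectSum.coe_decompose_mul_of_right_mem_of_le
      (𝒜 := fun i => (⋀[K]^i (Fin 4 → K) : Submodule K (ExteriorAlgebra K (Fin 4 → K))))
      (a := c z) (b := z) (i := 2) (n := 2) (hS z hzS) le_rfl
    simpa using this
  rw [h2]
  have h0 : (DirectSum.decompose (fun i => (⋀[K]^i (Fin 4 → K) : Submodule K _)) (c z) 0 :
      ExteriorAlgebra K (Fin 4 → K)) ∈ (1 : Submodule K (ExteriorAlgebra K (Fin 4 → K))) := by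
    have := ((DirectSum.decompose (fun i => (⋀[K]^i (Fin 4 → K) : Submodule K _)) (c z)) 0).2
    simpa [pow_zero] using this
  obtain ⟨r, hr⟩ := Submodule.mem_one.mp h0
  rw [← hr, ← Algebra.smul_def]
  exact Submodule.smul_mem _ _ (Submodule.subset_span hzS)

set_option maxHeartbeats 2000000 in
/-- In `E = K⟨a,b,c,d⟩` with `char K ≠ 2`: the element `a∧b + c∧d` corresponds to a
`4×4` alternating matrix of rank `4`, whereas every degree-2 element of an exterior
algebra on a 3-dimensional space of linear forms corresponds to an alternating matrix
of rank at most `2` (stated here: every `3×3` alternating matrix has rank ≤ 2).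
Consequently the ideal `(a∧b + c∧d, a∧c, b∧c)` is not the square of the maximal ideal of
any exterior subalgebra generated by 3 linear forms of `E`. -/
theorem stmt9 (K : Type*) [Field K] (hchar : (2 : K) ≠ 0) :
    (!![0, 1, 0, 0; -1, 0, 0, 0; 0, 0, 0, 1; 0, 0, -1, 0] : Matrix (Fin 4) (Fin 4) K).rank = 4 ∧
    (∀ C : Matrix (Fin 3) (Fin 3) K, C.transpose = -C → (∀ i, C i i = 0) → C.rank ≤ 2) ∧
    ¬ ∃ W : Submodule K (Fin 4 → K), Module.finrank K W = 3 ∧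
      Ideal.span {ExteriorAlgebra.ι K (Pi.single 0 (1:K)) * ExteriorAlgebra.ι K (Pi.single 1 1)
          + ExteriorAlgebra.ι K (Pi.single 2 1) * ExteriorAlgebra.ι K (Pi.single 3 1),
        ExteriorAlgebra.ι K (Pi.single 0 1) * ExteriorAlgebra.ι K (Pi.single 2 1),
        ExteriorAlgebra.ι K (Pi.single 1 1) * ExteriorAlgebra.ι K (Pi.single 2 1)}
      = Ideal.span {z : ExteriorAlgebra K (Fin 4 → K) |
          ∃ x ∈ W, ∃ y ∈ W, z = ExteriorAlgebra.ι K x * ExteriorAlgebra.ι K y} := by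
  refine ⟨?_, ?_, ?_⟩
  · -- rank of the explicit 4×4 matrix is 4
    have hdet : Matrix.det
        (!![0, 1, 0, 0; -1, 0, 0, 0; 0, 0, 0, 1; 0, 0, -1, 0] : Matrix (Fin 4) (Fin 4) K) = 1 := by
      simp [Matrix.det_succ_row_zero, Fin.sum_univ_succ, Fin.succAbove]
    have hunit : IsUnit
        (!![0, 1, 0, 0; -1, 0, 0, 0; 0, 0, 0, 1; 0, 0, -1, 0] : Matrix (Fin 4) (Fin 4) K) := by
      rw [Matrix.isUnit_iff_isUnit_det, hdet]
      exact isUnit_one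
    rw [Matrix.rank_of_isUnit _ hunit, Fintype.card_fin]
  · -- every 3×3 alternating matrix has rank ≤ 2
    intro C hCt _
    have hdet : C.det = 0 := by
      have h1 : C.det = -C.det := by
        calc C.det = C.transpose.det := (Matrix.det_transpose C).symm
        _ = (-C).det := by rw [hCt]
        _ = (-1) ^ 3 * C.det := by rw [Matrix.det_neg, Fintype.card_fin]
        _ = -C.det := by ring
      have h2 : (2 : K) * C.det = 0 := by linear_combination h1
      rcases mul_eq_zero.mp h2 with h | h
      · exact absurd h hchar
      · exact h
    obtain ⟨v, hv0, hCv⟩ := Matrix.exists_mulVec_eq_zero_iff.mpr hdet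
    have hker : v ∈ LinearMap.ker C.mulVecLin := by
      simpa [Matrix.mulVecLin] using hCv
    have hkerne : LinearMap.ker C.mulVecLin ≠ ⊥ := fun h => hv0 (by
      rw [h] at hker; simpa using hker)
    have hpos : 0 < Module.finrank K (LinearMap.ker C.mulVecLin) := by
      rw [Module.finrank_pos_iff]
      exact Submodule.nontrivial_iff_ne_bot.mpr hkerne
    have hrn := LinearMap.finrank_range_add_finrank_ker C.mulVecLin
    rw [Module.finrank_fintype_fun_eq_card, Fintype.card_fin] at hrn
    have : Matrix.rank C = Module.finrank K (LinearMap.range C.mulVecLin) := rfl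
    omega
  · -- the ideal statement
    rintro ⟨W, hW3, hEq⟩
    set e : Fin 4 → (Fin 4 → K) := fun i => Pi.single i 1 with he
    set ω : ExteriorAlgebra K (Fin 4 → K) :=
      ι K (Pi.single 0 (1:K)) * ι K (Pi.single 1 1) + ι K (Pi.single 2 1) * ι K (Pi.single 3 1)
      with hω
    set S : Set (ExteriorAlgebra K (Fin 4 → K)) :=
      {z : ExteriorAlgebra K (Fin 4 → K) | ∃ x ∈ W, ∃ y ∈ W, z = ι K x * ι K y} with hSdef
    -- ω is in the RHS ideal
    have hmem : ω ∈ Ideal.span S := by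
      rw [← hEq]
      exact Ideal.subset_span (Set.mem_insert _ _)
    -- all elements of S are of degree 2
    have hS2 : ∀ s ∈ S, s ∈ (⋀[K]^2 (Fin 4 → K) :
        Submodule K (ExteriorAlgebra K (Fin 4 → K))) := by
      rintro s ⟨x, hx, y, hy, rfl⟩
      show _ ∈ (LinearMap.range (ι K : (Fin 4 → K) →ₗ[K] ExteriorAlgebra K (Fin 4 → K))) ^ 2
      rw [pow_two]
      exact Submodule.mul_mem_mul (LinearMap.mem_range_self _ x) (LinearMap.mem_range_self _ y)
    -- ω itself is of degree 2
    have hω2 : ω ∈ (⋀[K]^2 (Fin 4 → K) : Submodule K (ExteriorAlgebra K (Fin 4 → K))) := by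
      show _ ∈ (LinearMap.range (ι K : (Fin 4 → K) →ₗ[K] ExteriorAlgebra K (Fin 4 → K))) ^ 2
      rw [pow_two]
      exact Submodule.add_mem _
        (Submodule.mul_mem_mul (LinearMap.mem_range_self _ _) (LinearMap.mem_range_self _ _))
        (Submodule.mul_mem_mul (LinearMap.mem_range_self _ _) (LinearMap.mem_range_self _ _))
    -- projecting to degree 2: ω lies in the K-span of S
    have hproj := stmt9_proj K S hS2 ω hmem
    rw [DirectSum.decompose_of_mem_same (fun i => (⋀[K]^i (Fin 4 → K) : Submodule K (ExteriorAlgebra K (Fin 4 → K)))) hω2] at hproj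
    -- any two elements of span K S multiply to zero (since dim W = 3)
    have hzero : ∀ u ∈ Submodule.span K S, ∀ v ∈ Submodule.span K S, u * v = 0 := by
      intro u hu v hv
      induction hu, hv using Submodule.span_induction₂ with
      | mem_mem x y hx hy =>
        obtain ⟨x1, hx1, x2, hx2, rfl⟩ := hx
        obtain ⟨y1, hy1, y2, hy2, rfl⟩ := hy
        exact stmt9_prod4 K W hW3 x1 x2 y1 y2 hx1 hx2 hy1 hy2
      | zero_left y hy => rw [zero_mul]
      | zero_right x hx => rw [mul_zero]
      | add_left x y z hx hy hz h1 h2 => rw [add_mul, h1, h2, add_zero]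
      | add_right x y z hx hy hz h1 h2 => rw [mul_add, h1, h2, add_zero]
      | smul_left r x y hx hy h => rw [smul_mul_assoc, h, smul_zero]
      | smul_right r x y hx hy h => rw [mul_smul_comm, h, smul_zero]
    have hωsq : ω * ω = 0 := hzero ω hproj ω hproj
    -- but applying the determinant functional gives 2 ≠ 0
    have hF := congrArg (liftAlternating (R := K) (M := Fin 4 → K) (N := K) (stmt9DetF K)) hωsq
    rw [hω] at hF
    rw [add_mul, mul_add, mul_add] at hF
    rw [stmt9_quad, stmt9_quad, stmt9_quad, stmt9_quad] at hF
    rw [map_zero, map_add, map_add, map_add] at hF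
    rw [liftAlternating_apply_ιMulti, liftAlternating_apply_ιMulti,
      liftAlternating_apply_ιMulti, liftAlternating_apply_ιMulti] at hF
    have hD : stmt9DetF K 4 = Matrix.detRowAlternating := rfl
    rw [hD] at hF
    have z1 : (Matrix.detRowAlternating (R := K) (n := Fin 4))
        ![Pi.single 0 1, Pi.single 1 1, Pi.single 0 1, Pi.single 1 1] = 0 := by
      refine AlternatingMap.map_eq_zero_of_eq _ _ (i := 0) (j := 2) rfl (by decide)
    have z2 : (Matrix.detRowAlternating (R := K) (n := Fin 4))
        ![Pi.single 2 1, Pi.single 3 1, Pi.single 2 1, Pi.single 3 1] = 0 := by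
      refine AlternatingMap.map_eq_zero_of_eq _ _ (i := 0) (j := 2) rfl (by decide)
    have d1 : (Matrix.detRowAlternating (R := K) (n := Fin 4))
        ![Pi.single 0 1, Pi.single 1 1, Pi.single 2 1, Pi.single 3 1] = 1 := by
      show Matrix.det (Matrix.of ![Pi.single 0 (1:K), Pi.single 1 1, Pi.single 2 1,
        Pi.single 3 1]) = 1
      simp [Matrix.det_succ_row_zero, Fin.sum_univ_succ, Pi.single_apply, Fin.succAbove]
    have d2 : (Matrix.detRowAlternating (R := K) (n := Fin 4))
        ![Pi.single 2 1, Pi.single 3 1, Pi.single 0 1, Pi.single 1 1] = 1 := by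
      show Matrix.det (Matrix.of ![Pi.single 2 (1:K), Pi.single 3 1, Pi.single 0 1,
        Pi.single 1 1]) = 1
      simp [Matrix.det_succ_row_zero, Fin.sum_univ_succ, Pi.single_apply, Fin.succAbove]
    rw [z1, z2, d1, d2] at hF
    apply hchar
    linear_combination hF
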